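/- For every element g of the braid group B₃ = ⟨σ₁, σ₂ | σ₁σ₂σ₁ = σ₂σ₁σ₂⟩, there exist a natural number k and an element p of the submonoid of B₃ generated by {σ₁, σ₂} (i.e., p is a finite product of copies of σ₁ and σ₂ with no inverses) such that g · ((σ₁σ₂)³)ᵏ = p. In other words, every element of B₃ agrees with a positive braid word modulo a nonnegative power of the central element Δ² = (σ₁σ₂)³. -/

import Mathlib

open Matrix MatrixGroups
open scoped LinearAlgebra.Projectivization

/-- The braid relation `σ₁σ₂σ₁ = σ₂σ₁σ₂`, with `σ₁` and `σ₂` the generators indexed by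
`false` and `true` respectively. -/
def braidRels : Set (FreeGroup Bool) :=
  {FreeGroup.of false * FreeGroup.of true * FreeGroup.of false *
    (FreeGroup.of true * FreeGroup.of false * FreeGroup.of true)⁻¹}

/-- The braid group `B₃ = ⟨σ₁, σ₂ ∣ σ₁σ₂σ₁ = σ₂σ₁σ₂⟩` on three strands. -/
abbrev B₃ := PresentedGroup braidRels

/-- The first standard generator of `B₃`. -/
def σ₁ : B₃ := PresentedGroup.of false

/-- The second standard generator of `B₃`. -/
def σ₂ : B₃ := PresentedGroup.of true

lemma braid_rel : σ₁ * σ₂ * σ₁ = σ₂ * σ₁ * σ₂ := by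
  have h : (PresentedGroup.mk braidRels)
      (FreeGroup.of false * FreeGroup.of true * FreeGroup.of false *
        (FreeGroup.of true * FreeGroup.of false * FreeGroup.of true)⁻¹) = 1 := by
    apply (QuotientGroup.eq_one_iff _).2
    exact Subgroup.subset_normalClosure rfl
  rw [_root_.map_mul, map_inv, mul_inv_eq_one, _root_.map_mul, _root_.map_mul,
    _root_.map_mul, _root_.map_mul] at h
  exact h

lemma expand : (σ₁ * σ₂) ^ 3 = (σ₁ * σ₂ * σ₁) * (σ₂ * σ₁ * σ₂) := by
  rw [pow_succ, pow_succ, pow_one]; group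

lemma delta_sq : (σ₁ * σ₂) ^ 3 = (σ₁ * σ₂ * σ₁) * (σ₁ * σ₂ * σ₁) := by
  rw [expand, ← braid_rel]

lemma sigma1_delta : σ₁ * (σ₁ * σ₂ * σ₁) = (σ₁ * σ₂ * σ₁) * σ₂ := by
  conv_lhs => rw [braid_rel]
  group

lemma sigma2_delta : σ₂ * (σ₁ * σ₂ * σ₁) = (σ₁ * σ₂ * σ₁) * σ₁ := by
  have h : σ₂ * (σ₁ * σ₂ * σ₁) = (σ₂ * σ₁ * σ₂) * σ₁ := by group
  rw [h, ← braid_rel]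

lemma central_σ₁ : Commute σ₁ ((σ₁ * σ₂) ^ 3) := by
  show σ₁ * (σ₁ * σ₂) ^ 3 = (σ₁ * σ₂) ^ 3 * σ₁
  rw [delta_sq, ← mul_assoc, sigma1_delta, mul_assoc, sigma2_delta, ← mul_assoc]

lemma central_σ₂ : Commute σ₂ ((σ₁ * σ₂) ^ 3) := by
  show σ₂ * (σ₁ * σ₂) ^ 3 = (σ₁ * σ₂) ^ 3 * σ₂
  rw [delta_sq, ← mul_assoc, sigma2_delta, mul_assoc, sigma1_delta, ← mul_assoc]

lemma central : ∀ g : B₃, Commute g ((σ₁ * σ₂) ^ 3) := by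
  intro g
  obtain ⟨w, rfl⟩ := PresentedGroup.mk_surjective braidRels g
  induction w using FreeGroup.induction_on with
  | C1 => simp [Commute.one_left]
  | of x =>
    cases x
    · exact central_σ₁
    · exact central_σ₂
  | inv_of x ih => rw [map_inv]; exact ih.inv_left
  | mul x y ihx ihy => rw [_root_.map_mul]; exact ihx.mul_left ihy

lemma inv_σ₁ : σ₁⁻¹ * (σ₁ * σ₂) ^ 3 = σ₂ * σ₁ * σ₂ * σ₁ * σ₂ := by
  rw [pow_succ, pow_succ, pow_one]; group

lemma inv_σ₂ : σ₂⁻¹ * (σ₁ * σ₂) ^ 3 = σ₁ * σ₂ * σ₂ * σ₁ * σ₂ := by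
  rw [expand]
  nth_rewrite 1 [braid_rel]
  group

/-- Every element of `B₃` agrees with a positive braid word after multiplying by a
nonnegative power of the central element `Δ² = (σ₁σ₂)³`. -/
theorem mul_central_pow_eq_positive (g : B₃) :
    ∃ (k : ℕ) (p : B₃), p ∈ Submonoid.closure ({σ₁, σ₂} : Set B₃) ∧
      g * ((σ₁ * σ₂) ^ 3) ^ k = p := by
  set D : B₃ := (σ₁ * σ₂) ^ 3 with hD
  have hmemσ₁ : σ₁ ∈ Submonoid.closure ({σ₁, σ₂} : Set B₃) :=
    Submonoid.subset_closure (by simp)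
  have hmemσ₂ : σ₂ ∈ Submonoid.closure ({σ₁, σ₂} : Set B₃) :=
    Submonoid.subset_closure (by simp)
  obtain ⟨w, rfl⟩ := PresentedGroup.mk_surjective braidRels g
  induction w using FreeGroup.induction_on with
  | C1 => exact ⟨0, 1, Submonoid.one_mem _, by simp⟩
  | of x =>
    cases x
    · refine ⟨0, σ₁, hmemσ₁, ?_⟩
      show (PresentedGroup.mk braidRels) (FreeGroup.of false) * D ^ 0 = σ₁
      simp [σ₁, PresentedGroup.of, PresentedGroup.mk]
    · refine ⟨0, σ₂, hmemσ₂, ?_⟩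
      show (PresentedGroup.mk braidRels) (FreeGroup.of true) * D ^ 0 = σ₂
      simp [σ₂, PresentedGroup.of, PresentedGroup.mk]
  | inv_of x ih =>
    cases x
    · refine ⟨1, σ₂ * σ₁ * σ₂ * σ₁ * σ₂, ?_, ?_⟩
      · exact Submonoid.mul_mem _ (Submonoid.mul_mem _ (Submonoid.mul_mem _
          (Submonoid.mul_mem _ hmemσ₂ hmemσ₁) hmemσ₂) hmemσ₁) hmemσ₂
      · show (PresentedGroup.mk braidRels) (FreeGroup.of false)⁻¹ * D ^ 1 = _
        rw [pow_one, map_inv]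
        have h1 : (PresentedGroup.mk braidRels) (FreeGroup.of false) = σ₁ := rfl
        rw [h1, hD, inv_σ₁]
    · refine ⟨1, σ₁ * σ₂ * σ₂ * σ₁ * σ₂, ?_, ?_⟩
      · exact Submonoid.mul_mem _ (Submonoid.mul_mem _ (Submonoid.mul_mem _
          (Submonoid.mul_mem _ hmemσ₁ hmemσ₂) hmemσ₂) hmemσ₁) hmemσ₂
      · show (PresentedGroup.mk braidRels) (FreeGroup.of true)⁻¹ * D ^ 1 = _
        rw [pow_one, map_inv]
        have h2 : (PresentedGroup.mk braidRels) (FreeGroup.of true) = σ₂ := rfl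
        rw [h2, hD, inv_σ₂]
  | mul x y ihx ihy =>
    obtain ⟨k, p, hp, hkp⟩ := ihx
    obtain ⟨m, q, hq, hmq⟩ := ihy
    refine ⟨k + m, p * q, Submonoid.mul_mem _ hp hq, ?_⟩
    have hc : ∀ (n : ℕ) (h : B₃), h * D ^ n = D ^ n * h := fun n h =>
      ((central h).pow_right n).eq
    rw [_root_.map_mul]
    calc PresentedGroup.mk braidRels x * PresentedGroup.mk braidRels y * D ^ (k + m)
        = PresentedGroup.mk braidRels x * ((PresentedGroup.mk braidRels y * D ^ m) * D ^ k) := by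
          rw [pow_add, ((Commute.refl D).pow_pow k m).eq]; group
      _ = PresentedGroup.mk braidRels x * (q * D ^ k) := by rw [hmq]
      _ = PresentedGroup.mk braidRels x * (D ^ k * q) := by rw [hc k q]
      _ = (PresentedGroup.mk braidRels x * D ^ k) * q := by rw [← mul_assoc]
      _ = p * q := by rw [hkp]
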